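/- Let L be the Laplacian of a connected weighted graph on N vertices with eigenvalues 0 = λ_1 < λ_2 ≤ … ≤ λ_N, and for i < j let R_{ij} denote the effective resistance between vertices i and j. Then the total effective resistance satisfies R_tot := Σ_{i<j} R_{ij} = N · Σ_{n=2}^{N} 1/λ_n. -/

import Mathlib

open Matrix

section Aux

variable {N : ℕ}

/-- Quadratic form identity for the Laplacian. -/
lemma lap_quad (W : Matrix (Fin N) (Fin N) ℝ) (hsym : W.IsSymm)
    (L : Matrix (Fin N) (Fin N) ℝ)
    (hL : L = Matrix.diagonal (fun i => ∑ j, W i j) - W) (v : Fin N → ℝ) :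
    2 * (v ⬝ᵥ L.mulVec v) = ∑ i, ∑ j, W i j * (v i - v j) ^ 2 := by
  have hWsym : ∀ i j, W j i = W i j := fun i j => congrFun (congrFun hsym i) j
  have h1 : v ⬝ᵥ L.mulVec v
      = (∑ i, ∑ j, W i j * v i ^ 2) - ∑ i, ∑ j, W i j * (v i * v j) := by
    subst hL
    simp only [dotProduct, mulVec, Matrix.sub_apply, diagonal_apply]
    rw [← Finset.sum_sub_distrib]
    apply Finset.sum_congr rfl
    intro i _
    calc v i * ∑ j, ((if i = j then ∑ k, W i k else 0) - W i j) * v j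
        = ∑ j, ((if i = j then (∑ k, W i k) * (v i * v j) else 0) - W i j * (v i * v j)) := by
          rw [Finset.mul_sum]; apply Finset.sum_congr rfl; intro j _
          by_cases h : i = j <;> simp [h] <;> ring
      _ = (∑ k, W i k) * (v i * v i) - ∑ j, W i j * (v i * v j) := by
          rw [Finset.sum_sub_distrib]
          congr 1
          rw [Finset.sum_ite_eq Finset.univ i fun j => (∑ k, W i k) * (v i * v j)]
          simp
      _ = (∑ j, W i j * v i ^ 2) - ∑ j, W i j * (v i * v j) := by
          rw [Finset.sum_mul]; congr 1; apply Finset.sum_congr rfl; intro j _; ring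
  have h2 : ∑ i, ∑ j, W i j * v j ^ 2 = ∑ i, ∑ j, W i j * v i ^ 2 := by
    rw [Finset.sum_comm]
    congr 1; ext i; congr 1; ext j; rw [hWsym]
  have expand : ∀ i j : Fin N, W i j * (v i - v j) ^ 2
      = W i j * v i ^ 2 + W i j * v j ^ 2 - 2 * (W i j * (v i * v j)) := fun i j => by ring
  calc 2 * (v ⬝ᵥ L.mulVec v)
      = (∑ i, ∑ j, W i j * v i ^ 2) + (∑ i, ∑ j, W i j * v j ^ 2)
        - 2 * ∑ i, ∑ j, W i j * (v i * v j) := by rw [h1, h2]; ring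
    _ = ∑ i, ∑ j, W i j * (v i - v j) ^ 2 := by
        simp only [expand, Finset.sum_sub_distrib, Finset.sum_add_distrib, Finset.mul_sum]

/-- Vectors in the kernel of the Laplacian of a connected graph are constant. -/
lemma ker_const (W : Matrix (Fin N) (Fin N) ℝ) (hsym : W.IsSymm)
    (hnn : ∀ i j, 0 ≤ W i j)
    (L : Matrix (Fin N) (Fin N) ℝ)
    (hL : L = Matrix.diagonal (fun i => ∑ j, W i j) - W)
    (G : SimpleGraph (Fin N)) (hG : ∀ i j, G.Adj i j ↔ i ≠ j ∧ 0 < W i j)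
    (hconn : G.Connected) (v : Fin N → ℝ) (hv : L.mulVec v = 0) :
    ∀ i j, v i = v j := by
  have hq : ∑ i, ∑ j, W i j * (v i - v j) ^ 2 = 0 := by
    rw [← lap_quad W hsym L hL v, hv]; simp
  have hterm : ∀ i j, W i j * (v i - v j) ^ 2 = 0 := by
    have h1 : ∀ i ∈ Finset.univ, (0:ℝ) ≤ ∑ j, W i j * (v i - v j) ^ 2 := fun i _ =>
      Finset.sum_nonneg fun j _ => mul_nonneg (hnn i j) (sq_nonneg _)
    intro i j
    have h2 := (Finset.sum_eq_zero_iff_of_nonneg h1).mp hq i (Finset.mem_univ i)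
    have h3 : ∀ j ∈ Finset.univ, (0:ℝ) ≤ W i j * (v i - v j) ^ 2 := fun j _ =>
      mul_nonneg (hnn i j) (sq_nonneg _)
    exact (Finset.sum_eq_zero_iff_of_nonneg h3).mp h2 j (Finset.mem_univ j)
  have hadj : ∀ i j, G.Adj i j → v i = v j := by
    intro i j hij
    rcases (hG i j).mp hij with ⟨-, hW⟩
    have := hterm i j
    have h4 : (v i - v j) ^ 2 = 0 := by
      by_contra h
      exact h (by nlinarith [sq_nonneg (v i - v j)])
    have := pow_eq_zero_iff (n := 2) (by norm_num) |>.mp h4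
    linarith [sub_eq_zero.mp this]
  intro i j
  obtain ⟨w⟩ := hconn.preconnected i j
  induction w with
  | nil => rfl
  | cons h p ih => exact (hadj _ _ h).trans ih

end Aux

/-- For a connected weighted graph with Laplacian `L` whose eigenvalues
(listed in nondecreasing order as `μ`) satisfy `0 = μ₁ < μ₂ ≤ … ≤ μ_N`, the total
effective resistance satisfies `R_tot = ∑_{i<j} Rᵢⱼ = N · ∑_{n=2}^N 1/μₙ`, where
`Rᵢⱼ = vᵢ - vⱼ` for any solution `v` of `L v = δᵢ - δⱼ`. -/
theorem stmt_10 {N : ℕ} (hN : 0 < N) (W : Matrix (Fin N) (Fin N) ℝ)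
    (hsym : W.IsSymm) (hnn : ∀ i j, 0 ≤ W i j) (hdiag : ∀ i, W i i = 0)
    (L : Matrix (Fin N) (Fin N) ℝ)
    (hL : L = Matrix.diagonal (fun i => ∑ j, W i j) - W)
    (G : SimpleGraph (Fin N)) (hG : ∀ i j, G.Adj i j ↔ i ≠ j ∧ 0 < W i j)
    (hconn : G.Connected)
    (hLH : L.IsHermitian)
    (μ : Fin N → ℝ) (hmono : Monotone μ)
    (hperm : ∃ σ : Equiv.Perm (Fin N), ∀ n, μ n = hLH.eigenvalues (σ n))
    (h0 : μ ⟨0, hN⟩ = 0) (hpos : ∀ n, n ≠ ⟨0, hN⟩ → 0 < μ n)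
    (R : Fin N → Fin N → ℝ)
    (hR : ∀ i j, ∀ v : Fin N → ℝ,
      L.mulVec v = (Pi.single i 1 - Pi.single j 1 : Fin N → ℝ) → R i j = v i - v j) :
    ∑ i : Fin N, ∑ j ∈ Finset.univ.filter (fun j => i < j), R i j
      = (N : ℝ) * ∑ n ∈ Finset.univ.filter (fun n => n ≠ (⟨0, hN⟩ : Fin N)), (μ n)⁻¹ := by
  obtain ⟨σ, hσ⟩ := hperm
  set z : Fin N := ⟨0, hN⟩ with hz
  set k₀ : Fin N := σ z with hk₀
  set U : Matrix (Fin N) (Fin N) ℝ := (hLH.eigenvectorUnitary : Matrix (Fin N) (Fin N) ℝ)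
    with hUdef
  set ev : Fin N → ℝ := hLH.eigenvalues with hev
  have hspec : L = U * diagonal ev * star U := by
    convert hLH.spectral_theorem using 2
    rw [Unitary.conjStarAlgAut_apply]; rfl
  have hUU : U * star U = 1 := (Matrix.mem_unitaryGroup_iff).mp hLH.eigenvectorUnitary.2
  have hUU' : star U * U = 1 := (Matrix.mem_unitaryGroup_iff').mp hLH.eigenvectorUnitary.2
  -- eigenvalues via permutation
  have hevpos : ∀ k, k ≠ k₀ → 0 < ev k := by
    intro k hk
    have h1 : σ.symm k ≠ z := fun h => hk (by rw [hk₀, ← h, Equiv.apply_symm_apply])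
    have := hpos (σ.symm k) h1
    rwa [hσ, Equiv.apply_symm_apply] at this
  have hevz : ev k₀ = 0 := by rw [hk₀, ← hσ z, h0]
  -- the k₀-th column of U
  set u : Fin N → ℝ := fun i => U i k₀ with hu
  have hLu : L.mulVec u = 0 := by
    have hLU : L * U = U * diagonal ev := by
      rw [hspec, mul_assoc, mul_assoc, hUU', mul_one]
    funext i
    have h2 : (L * U) i k₀ = (U * diagonal ev) i k₀ := by rw [hLU]
    rw [mul_apply, mul_diagonal] at h2
    simp only [mulVec, dotProduct, Pi.zero_apply]
    rw [show ∑ j, L i j * u j = ∑ j, L i j * U j k₀ from rfl, h2, hevz, mul_zero]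
  have huconst : ∀ i j, u i = u j :=
    ker_const W hsym hnn L hL G hG hconn u hLu
  -- u is constant with value c, and N c^2 = 1
  obtain ⟨i₀⟩ : Nonempty (Fin N) := ⟨z⟩
  set c : ℝ := u i₀ with hc
  have hu_eq : ∀ i, u i = c := fun i => huconst i i₀
  have hnorm : (N : ℝ) * c ^ 2 = 1 := by
    have h1 : (star U * U) k₀ k₀ = 1 := by rw [hUU']; simp
    rw [mul_apply] at h1
    simp only [star_apply, star_trivial] at h1
    calc (N : ℝ) * c ^ 2 = ∑ _i : Fin N, c ^ 2 := by
          rw [Finset.sum_const]; simp [mul_comm]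
      _ = ∑ i : Fin N, U i k₀ * U i k₀ := by
          congr 1; ext i; rw [show U i k₀ = u i from rfl, hu_eq]; ring
      _ = 1 := h1
  have hNne : (N : ℝ) ≠ 0 := Nat.cast_ne_zero.mpr hN.ne'
  have hc2 : c ^ 2 = (N : ℝ)⁻¹ := by field_simp at hnorm ⊢; linarith
  -- the modified matrix A and its inverse B
  set d : Fin N → ℝ := fun k => if k = k₀ then 1 else ev k with hd
  have hdne : ∀ k, d k ≠ 0 := by
    intro k; rw [hd]; dsimp only
    split
    · exact one_ne_zero
    · next h => exact (hevpos k h).ne'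
  set A : Matrix (Fin N) (Fin N) ℝ := U * diagonal d * star U with hA
  set B : Matrix (Fin N) (Fin N) ℝ := U * diagonal (fun k => (d k)⁻¹) * star U with hB
  have hAB : A * B = 1 := by
    rw [hA, hB]
    calc U * diagonal d * star U * (U * diagonal (fun k => (d k)⁻¹) * star U)
        = U * diagonal d * (star U * U) * diagonal (fun k => (d k)⁻¹) * star U := by
          simp only [mul_assoc]
      _ = U * (diagonal d * diagonal (fun k => (d k)⁻¹)) * star U := by
          rw [hUU']; simp only [mul_one, mul_assoc]
      _ = 1 := by
          rw [diagonal_mul_diagonal]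
          have : (fun k => d k * (d k)⁻¹) = fun _ => (1:ℝ) := by
            funext k; exact mul_inv_cancel₀ (hdne k)
          rw [this, diagonal_one, mul_one, hUU]
  have hBA : B * A = 1 := by
    rw [hA, hB]
    calc U * diagonal (fun k => (d k)⁻¹) * star U * (U * diagonal d * star U)
        = U * diagonal (fun k => (d k)⁻¹) * (star U * U) * diagonal d * star U := by
          simp only [mul_assoc]
      _ = U * (diagonal (fun k => (d k)⁻¹) * diagonal d) * star U := by
          rw [hUU']; simp only [mul_one, mul_assoc]
      _ = 1 := by
          rw [diagonal_mul_diagonal]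
          have : (fun k => (d k)⁻¹ * d k) = fun _ => (1:ℝ) := by
            funext k; exact inv_mul_cancel₀ (hdne k)
          rw [this, diagonal_one, mul_one, hUU]
  -- entry formula for conjugation by U of a diagonal matrix
  have hentry : ∀ (g : Fin N → ℝ) (i j : Fin N),
      (U * diagonal g * star U) i j = ∑ k, g k * (U i k * U j k) := by
    intro g i j
    rw [mul_apply]
    simp only [mul_diagonal, star_apply, star_trivial]
    apply Finset.sum_congr rfl; intro b _; ring
  -- E := A - L has all entries 1/N
  have hAL : ∀ i j, A i j = L i j + (N:ℝ)⁻¹ := by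
    intro i j
    have h1 : A i j = ∑ k, d k * (U i k * U j k) := hentry d i j
    have h2 : L i j = ∑ k, ev k * (U i k * U j k) := by rw [hspec]; exact hentry ev i j
    rw [h1, h2]
    have h3 : ∀ k, d k * (U i k * U j k)
        = ev k * (U i k * U j k) + (if k = k₀ then U i k₀ * U j k₀ else 0) := by
      intro k; rw [hd]; dsimp only
      split
      · next h => subst h; rw [hevz]; ring
      · ring
    simp only [h3, Finset.sum_add_distrib]
    congr 1
    rw [Finset.sum_ite_eq' Finset.univ k₀ (fun _ => U i k₀ * U j k₀)]
    simp only [Finset.mem_univ, if_true]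
    rw [show U i k₀ = u i from rfl, show U j k₀ = u j from rfl, hu_eq, hu_eq, ← sq, hc2]
  -- B is symmetric
  have hBsymm : ∀ i j, B i j = B j i := by
    intro i j
    rw [hB, hentry, hentry]
    congr 1; ext k; ring
  -- A 1 = 1, hence B 1 = 1
  have hL1 : L.mulVec (fun _ => 1) = 0 := by
    funext i
    simp only [mulVec, dotProduct, mul_one, Pi.zero_apply, hL, Matrix.sub_apply, diagonal_apply]
    rw [Finset.sum_sub_distrib]
    rw [Finset.sum_ite_eq Finset.univ i (fun _ => ∑ j, W i j)]
    simp
  have hA1 : A.mulVec (fun _ => 1) = (fun _ => 1) := by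
    funext i
    simp only [mulVec, dotProduct, mul_one]
    have : ∑ j, A i j = ∑ j, (L i j + (N:ℝ)⁻¹) := by
      congr 1; ext j; exact hAL i j
    rw [this, Finset.sum_add_distrib]
    have hLrow : ∑ j, L i j = 0 := by
      have := congrFun hL1 i
      simpa [mulVec, dotProduct] using this
    rw [hLrow, Finset.sum_const]
    simp [hNne]
  have hB1 : B.mulVec (fun _ => 1) = (fun _ => 1) := by
    have h1 : B.mulVec (A.mulVec (fun _ => 1)) = (fun _ => 1) := by
      rw [Matrix.mulVec_mulVec, hBA, Matrix.one_mulVec]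
    rwa [hA1] at h1
  have hBrow : ∀ i, ∑ j, B i j = 1 := by
    intro i
    have := congrFun hB1 i
    simpa [mulVec, dotProduct] using this
  have hBcol : ∀ j, ∑ i, B i j = 1 := by
    intro j
    rw [show ∑ i, B i j = ∑ i, B j i from Finset.sum_congr rfl fun i _ => hBsymm i j]
    exact hBrow j
  -- the resistance formula
  have hRform : ∀ i j : Fin N, R i j = B i i + B j j - 2 * B i j := by
    intro i j
    set x : Fin N → ℝ := (Pi.single i 1 - Pi.single j 1 : Fin N → ℝ) with hx
    have hxsum : ∑ k, x k = 0 := by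
      simp [hx, Finset.sum_sub_distrib]
    set v : Fin N → ℝ := B.mulVec x with hv
    have hLv : L.mulVec v = x := by
      have hAv : A.mulVec v = x := by
        rw [hv, Matrix.mulVec_mulVec, hAB, Matrix.one_mulVec]
      have hvsum : ∑ k, v k = 0 := by
        rw [hv]
        simp only [mulVec, dotProduct]
        rw [Finset.sum_comm]
        calc ∑ k, ∑ l, B l k * x k = ∑ k, (∑ l, B l k) * x k := by
              congr 1; ext k; rw [Finset.sum_mul]
          _ = ∑ k, x k := by congr 1; ext k; rw [hBcol k, one_mul]
          _ = 0 := hxsum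
      funext m
      have h1 : L.mulVec v m = A.mulVec v m - (N:ℝ)⁻¹ * ∑ k, v k := by
        simp only [mulVec, dotProduct]
        calc ∑ k, L m k * v k = ∑ k, (A m k * v k - (N:ℝ)⁻¹ * v k) := by
              congr 1; ext k; rw [hAL m k]; ring
          _ = ∑ k, A m k * v k - (N:ℝ)⁻¹ * ∑ k, v k := by
              rw [Finset.sum_sub_distrib, Finset.mul_sum]
      rw [h1, hvsum, hAv]
      ring
    have hform := hR i j v hLv
    rw [hform]
    have hvi : ∀ m : Fin N, v m = B m i - B m j := by
      intro m
      rw [hv]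
      simp only [mulVec, dotProduct, hx, Pi.sub_apply, Pi.single_apply, mul_sub, mul_ite,
        mul_one, mul_zero, Finset.sum_sub_distrib, Finset.sum_ite_eq', Finset.mem_univ, if_true]
    rw [hvi i, hvi j, hBsymm j i]
    ring
  -- trace of B
  have htrB : Matrix.trace B = 1 + ∑ k ∈ Finset.univ.filter (fun k => k ≠ k₀), (ev k)⁻¹ := by
    have h1 : Matrix.trace B = Matrix.trace (diagonal (fun k => (d k)⁻¹)) := by
      rw [hB, Matrix.trace_mul_comm, ← mul_assoc, hUU', one_mul]
    rw [h1, Matrix.trace_diagonal]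
    rw [show ∑ k, (d k)⁻¹ = ∑ k, (if k = k₀ then (1:ℝ) else (ev k)⁻¹) by
      congr 1; ext k; rw [hd]; dsimp only; split <;> simp]
    rw [Finset.sum_ite, Finset.sum_const]
    have : Finset.univ.filter (fun k : Fin N => k = k₀) = {k₀} := by
      ext k; simp
    rw [this]
    simp only [Finset.card_singleton, one_smul, ne_eq]
  -- sum over eigenvalues equals sum over μ
  have hsum_eq : ∑ k ∈ Finset.univ.filter (fun k => k ≠ k₀), (ev k)⁻¹
      = ∑ n ∈ Finset.univ.filter (fun n => n ≠ z), (μ n)⁻¹ := by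
    apply Finset.sum_nbij' (fun k => σ.symm k) (fun n => σ n)
    · intro k hk
      simp only [Finset.mem_filter, Finset.mem_univ, true_and] at hk ⊢
      intro h; apply hk; rw [← Equiv.apply_symm_apply σ k, h]
    · intro n hn
      simp only [Finset.mem_filter, Finset.mem_univ, true_and] at hn ⊢
      intro h; exact hn (by rw [← Equiv.symm_apply_apply σ n, h, hk₀, Equiv.symm_apply_apply])
    · intro k _; exact Equiv.apply_symm_apply σ k
    · intro n _; exact Equiv.symm_apply_apply σ n
    · intro k _
      rw [hσ (σ.symm k), Equiv.apply_symm_apply]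
  -- the double-sum computation
  have hRsum : ∑ i : Fin N, ∑ j ∈ Finset.univ.filter (fun j => i < j), R i j
      = (N : ℝ) * Matrix.trace B - N := by
    set f : Fin N → Fin N → ℝ := fun i j => B i i + B j j - 2 * B i j with hf
    have hfsymm : ∀ i j, f i j = f j i := by
      intro i j; rw [hf]; dsimp only; rw [hBsymm i j]; ring
    have hfdiag : ∀ i, f i i = 0 := by intro i; rw [hf]; dsimp only; ring
    have hfull : ∑ i : Fin N, ∑ j : Fin N, f i j = 2 * ((N:ℝ) * Matrix.trace B - N) := by
      have hsum1 : ∑ i : Fin N, ∑ j : Fin N, B i i = (N:ℝ) * Matrix.trace B := by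
        rw [Matrix.trace, Finset.mul_sum]
        apply Finset.sum_congr rfl
        intro i _
        simp [Matrix.diag, Finset.sum_const, Finset.card_univ, nsmul_eq_mul]
      have hsum2 : ∑ i : Fin N, ∑ j : Fin N, B j j = (N:ℝ) * Matrix.trace B := by
        rw [Finset.sum_comm]; exact hsum1
      have hsum3 : ∑ i : Fin N, ∑ j : Fin N, B i j = (N:ℝ) := by
        calc ∑ i : Fin N, ∑ j : Fin N, B i j = ∑ i : Fin N, (1:ℝ) := by
              congr 1; ext i; exact hBrow i
          _ = N := by simp
      calc ∑ i : Fin N, ∑ j : Fin N, f i j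
          = ∑ i : Fin N, ∑ j : Fin N, (B i i + B j j - 2 * B i j) := rfl
        _ = (∑ i : Fin N, ∑ j : Fin N, B i i) + (∑ i : Fin N, ∑ j : Fin N, B j j)
            - 2 * ∑ i : Fin N, ∑ j : Fin N, B i j := by
            simp only [Finset.sum_add_distrib, Finset.sum_sub_distrib, Finset.mul_sum]
        _ = 2 * ((N:ℝ) * Matrix.trace B - N) := by rw [hsum1, hsum2, hsum3]; ring
    have hhalf : 2 * ∑ i : Fin N, ∑ j ∈ Finset.univ.filter (fun j => i < j), f i j
        = ∑ i : Fin N, ∑ j : Fin N, f i j := by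
      have e1 : ∀ i : Fin N, ∑ j ∈ Finset.univ.filter (fun j => i < j), f i j
          = ∑ j : Fin N, (if i < j then f i j else 0) := fun i => by
        rw [Finset.sum_filter]
      have e2 : ∑ i : Fin N, ∑ j : Fin N, (if i < j then f i j else 0)
          = ∑ i : Fin N, ∑ j : Fin N, (if j < i then f i j else 0) := by
        rw [Finset.sum_comm]
        congr 1; ext i; congr 1; ext j
        by_cases h : j < i <;> simp [h, hfsymm i j]
      calc 2 * ∑ i : Fin N, ∑ j ∈ Finset.univ.filter (fun j => i < j), f i j
          = (∑ i : Fin N, ∑ j : Fin N, (if i < j then f i j else 0))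
            + ∑ i : Fin N, ∑ j : Fin N, (if j < i then f i j else 0) := by
            simp only [e1]; rw [← e2]; ring
        _ = ∑ i : Fin N, ∑ j : Fin N, ((if i < j then f i j else 0)
              + (if j < i then f i j else 0)) := by
            rw [← Finset.sum_add_distrib]
            congr 1; ext i; rw [← Finset.sum_add_distrib]
        _ = ∑ i : Fin N, ∑ j : Fin N, f i j := by
            congr 1; ext i; congr 1; ext j
            rcases lt_trichotomy i j with h | h | h
            · simp [h, asymm h]
            · simp [h, hfdiag]
            · simp [h, asymm h]
    have : ∑ i : Fin N, ∑ j ∈ Finset.univ.filter (fun j => i < j), R i j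
        = ∑ i : Fin N, ∑ j ∈ Finset.univ.filter (fun j => i < j), f i j := by
      congr 1; ext i
      apply Finset.sum_congr rfl
      intro j _
      rw [hRform i j]
    rw [this]
    linarith [hhalf.trans hfull]
  rw [hRsum, htrB, ← hsum_eq]
  ring
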